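/- For every graph H with at least one edge, every H-saturated graph G on n vertices satisfies |E(G)| ≥ ((wt(H)-1)/2)·n − (wt(H)² − 4·wt(H) + 5)/2, provided wt(H) ≥ 2. -/

import Mathlib

open SimpleGraph

/-- `H` has a copy in `G`: an injective graph homomorphism (i.e. a subgraph isomorphic to `H`). -/
def hasCopy {α β : Type*} (H : SimpleGraph α) (G : SimpleGraph β) : Prop :=
  ∃ f : H →g G, Function.Injective f

/-- `G` is `H`-saturated: `H`-free, and adding any missing edge creates a copy of `H`. -/
def isSat {α β : Type*} (H : SimpleGraph α) (G : SimpleGraph β) : Prop :=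
  ¬ hasCopy H G ∧ ∀ x y : β, x ≠ y → ¬ G.Adj x y →
    hasCopy H (G ⊔ SimpleGraph.fromEdgeSet {s(x, y)})

/-- The weight of an edge `uv`: with `deg u ≤ deg v`,
`wt(uv) = 2|N(u) ∩ N(v)| + |N(v) \ N(u)|`. -/
noncomputable def edgeWt {α : Type*} (H : SimpleGraph α) (u v : α) : ℕ :=
  if (H.neighborSet u).ncard ≤ (H.neighborSet v).ncard then
    2 * (H.neighborSet u ∩ H.neighborSet v).ncard + ((H.neighborSet v) \ (H.neighborSet u)).ncard
  else
    2 * (H.neighborSet u ∩ H.neighborSet v).ncard + ((H.neighborSet u) \ (H.neighborSet v)).ncard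

/-- The weight of a graph: the minimum weight of an edge. -/
noncomputable def graphWt {α : Type*} (H : SimpleGraph α) : ℕ :=
  sInf {w | ∃ u v, H.Adj u v ∧ w = edgeWt H u v}

/-- The saturation number: minimum number of edges of an `H`-saturated graph on `n` vertices. -/
noncomputable def satNum {α : Type*} (H : SimpleGraph α) (n : ℕ) : ℕ :=
  sInf {m | ∃ G : SimpleGraph (Fin n), isSat H G ∧ Nat.card G.edgeSet = m}

/-- The graph obtained from `H` by adding a dominating vertex (`none`). -/
def addDom {α : Type*} (H : SimpleGraph α) : SimpleGraph (Option α) :=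
  SimpleGraph.fromRel (fun x y => x = none ∨ ∃ u v, x = some u ∧ y = some v ∧ H.Adj u v)

/-- Key lemma: if `G` is `H`-saturated and `x ≠ y` are non-adjacent, then
`wt(H) ≤ max(deg x, deg y) + |N(x) ∩ N(y)| + 1`. -/
lemma key_lemma {α : Type*} [Fintype α] (H : SimpleGraph α) [DecidableRel H.Adj]
    {n : ℕ} (G : SimpleGraph (Fin n)) [DecidableRel G.Adj]
    (hsat : isSat H G) {x y : Fin n} (hxy : x ≠ y) (hna : ¬ G.Adj x y) :
    graphWt H ≤ max (G.degree x) (G.degree y)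
      + (G.neighborFinset x ∩ G.neighborFinset y).card + 1 := by
  classical
  obtain ⟨f, hfinj⟩ := hsat.2 x y hxy hna
  have hex : ∃ u v, H.Adj u v ∧ ¬ G.Adj (f u) (f v) := by
    by_contra h
    push_neg at h
    exact hsat.1 ⟨⟨f, fun {a b} hadj => h a b hadj⟩, hfinj⟩
  obtain ⟨u, v, huv, hnG⟩ := hex
  have hG'uv : (G ⊔ SimpleGraph.fromEdgeSet {s(x, y)}).Adj (f u) (f v) := f.map_adj huv
  have hset : (f u = x ∧ f v = y) ∨ (f u = y ∧ f v = x) := by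
    rw [SimpleGraph.sup_adj] at hG'uv
    rcases hG'uv with h | h
    · exact absurd h hnG
    · rw [SimpleGraph.fromEdgeSet_adj] at h
      have h1 : s(f u, f v) = s(x, y) := by simpa using h.1
      exact Sym2.eq_iff.mp h1
  have hGadj : ∀ a c : Fin n, (G ⊔ SimpleGraph.fromEdgeSet {s(x, y)}).Adj a c → c ≠ x → c ≠ y → G.Adj a c := by
    intro a c h hcx hcy
    rw [SimpleGraph.sup_adj] at h
    rcases h with h | h
    · exact h
    · rw [SimpleGraph.fromEdgeSet_adj] at h
      have h1 : s(a, c) = s(x, y) := by simpa using h.1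
      rcases Sym2.eq_iff.mp h1 with ⟨_, h2⟩ | ⟨_, h2⟩
      · exact absurd h2 hcy
      · exact absurd h2 hcx
  -- common neighbors
  have hcommon : (H.neighborFinset u ∩ H.neighborFinset v).card
      ≤ (G.neighborFinset x ∩ G.neighborFinset y).card := by
    apply Finset.card_le_card_of_injOn f _ (hfinj.injOn)
    intro b hb
    simp only [Finset.mem_coe, Finset.mem_inter, SimpleGraph.mem_neighborFinset] at hb ⊢
    have h1 : (G ⊔ SimpleGraph.fromEdgeSet {s(x, y)}).Adj (f u) (f b) := f.map_adj hb.1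
    have h2 : (G ⊔ SimpleGraph.fromEdgeSet {s(x, y)}).Adj (f v) (f b) := f.map_adj hb.2
    have hbu : f b ≠ f u := fun h => hb.1.ne' (hfinj h)
    have hbv : f b ≠ f v := fun h => hb.2.ne' (hfinj h)
    rcases hset with ⟨hux, hvy⟩ | ⟨huy, hvx⟩
    · have hbx : f b ≠ x := fun h => hbu (h.trans hux.symm)
      have hby : f b ≠ y := fun h => hbv (h.trans hvy.symm)
      exact ⟨hGadj x (f b) (by rwa [hux] at h1) hbx hby,
        hGadj y (f b) (by rwa [hvy] at h2) hbx hby⟩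
    · have hbx : f b ≠ x := fun h => hbv (h.trans hvx.symm)
      have hby : f b ≠ y := fun h => hbu (h.trans huy.symm)
      exact ⟨hGadj x (f b) (by rwa [hvx] at h2) hbx hby,
        hGadj y (f b) (by rwa [huy] at h1) hbx hby⟩
  -- degree bound
  have hdeg : ∀ a : α, H.degree a ≤ G.degree (f a) + 1 := by
    intro a
    have h1 : (H.neighborFinset a).card
        ≤ (insert (if f a = x then y else x) (G.neighborFinset (f a))).card := by
      apply Finset.card_le_card_of_injOn f _ (hfinj.injOn)
      intro b hb
      rw [Finset.mem_coe, SimpleGraph.mem_neighborFinset] at hb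
      have h2 : (G ⊔ SimpleGraph.fromEdgeSet {s(x, y)}).Adj (f a) (f b) := f.map_adj hb
      rw [SimpleGraph.sup_adj] at h2
      rcases h2 with h2 | h2
      · exact Finset.mem_insert_of_mem (by rwa [SimpleGraph.mem_neighborFinset])
      · rw [SimpleGraph.fromEdgeSet_adj] at h2
        have h3 : s(f a, f b) = s(x, y) := by simpa using h2.1
        rcases Sym2.eq_iff.mp h3 with ⟨ha, hb'⟩ | ⟨ha, hb'⟩
        · simp [ha, hb']
        · simp [ha, hb', hxy.symm, Ne.symm hxy]
    calc H.degree a = (H.neighborFinset a).card := rfl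
      _ ≤ _ := h1
      _ ≤ (G.neighborFinset (f a)).card + 1 := Finset.card_insert_le _ _
      _ = G.degree (f a) + 1 := rfl
  have hmaxu : G.degree (f u) ≤ max (G.degree x) (G.degree y) := by
    rcases hset with ⟨h, _⟩ | ⟨h, _⟩ <;> rw [h]
    · exact le_max_left _ _
    · exact le_max_right _ _
  have hmaxv : G.degree (f v) ≤ max (G.degree x) (G.degree y) := by
    rcases hset with ⟨_, h⟩ | ⟨_, h⟩ <;> rw [h]
    · exact le_max_right _ _
    · exact le_max_left _ _
  -- ncard / card conversions
  have hA : ∀ a : α, (H.neighborSet a).ncard = H.degree a := by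
    intro a
    rw [Set.ncard_eq_toFinset_card']
    rfl
  have hI : (H.neighborSet u ∩ H.neighborSet v).ncard
      = (H.neighborFinset u ∩ H.neighborFinset v).card := by
    rw [Set.ncard_eq_toFinset_card', Set.toFinset_inter]
    simp only [SimpleGraph.neighborFinset_def]
  have hs1 : (H.neighborSet u ∩ H.neighborSet v).ncard
      + (H.neighborSet v \ H.neighborSet u).ncard = (H.neighborSet v).ncard := by
    rw [Set.inter_comm]
    exact Set.ncard_inter_add_ncard_diff_eq_ncard _ _ (Set.toFinite _)
  have hs2 : (H.neighborSet u ∩ H.neighborSet v).ncard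
      + (H.neighborSet u \ H.neighborSet v).ncard = (H.neighborSet u).ncard :=
    Set.ncard_inter_add_ncard_diff_eq_ncard _ _ (Set.toFinite _)
  have hwt : graphWt H ≤ edgeWt H u v := Nat.sInf_le ⟨u, v, huv, rfl⟩
  have hdu : (H.neighborSet u).ncard ≤ max (G.degree x) (G.degree y) + 1 := by
    rw [hA]; exact le_trans (hdeg u) (by omega)
  have hdv : (H.neighborSet v).ncard ≤ max (G.degree x) (G.degree y) + 1 := by
    rw [hA]; exact le_trans (hdeg v) (by omega)
  have hIc : (H.neighborSet u ∩ H.neighborSet v).ncard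
      ≤ (G.neighborFinset x ∩ G.neighborFinset y).card := hI ▸ hcommon
  rw [edgeWt] at hwt
  split_ifs at hwt with hcase
  · omega
  · omega

/-- Arithmetic endgame. -/
lemma final_arith (w d b E n : ℕ) (hw : 2 ≤ w) (hn : n = d + 1 + b)
    (h1 : w * b + 2 * d ≤ 2 * E + b) (h2 : d * n ≤ 2 * E) :
    ((w : ℤ) - 1) * n ≤ 2 * E + ((w : ℤ) ^ 2 - 4 * w + 5) := by
  have hnz : (n : ℤ) = d + 1 + b := by exact_mod_cast hn
  have hz1 : (w : ℤ) * b + 2 * d ≤ 2 * E + b := by exact_mod_cast h1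
  have hz2 : (d : ℤ) * n ≤ 2 * E := by exact_mod_cast h2
  have hwz : (2 : ℤ) ≤ w := by exact_mod_cast hw
  have hb0 : (0 : ℤ) ≤ b := by positivity
  have hd0 : (0 : ℤ) ≤ d := by positivity
  rcases le_or_gt w (d + 1) with hc | hc
  · -- w - 1 ≤ d
    have hcz : (w : ℤ) ≤ d + 1 := by exact_mod_cast hc
    have hn0 : (0 : ℤ) ≤ n := by positivity
    nlinarith [sq_nonneg ((w : ℤ) - 2), mul_le_mul_of_nonneg_right (by linarith : (w : ℤ) - 1 ≤ d) hn0]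
  · -- d + 2 ≤ w
    have hcz : (d : ℤ) + 2 ≤ w := by exact_mod_cast hc
    rcases le_or_gt 3 w with hw3 | hw3
    · have hw3z : (3 : ℤ) ≤ w := by exact_mod_cast hw3
      nlinarith [mul_nonneg (by linarith : (0 : ℤ) ≤ (w : ℤ) - 3)
        (by linarith : (0 : ℤ) ≤ (w : ℤ) - 2 - d)]
    · have hw2 : w = 2 := by omega
      subst hw2
      have hgoal : n ≤ 2 * E + 1 := by omega
      have : (n : ℤ) ≤ 2 * E + 1 := by exact_mod_cast hgoal
      push_cast
      linarith

/-- General lower bound: any `H`-saturated graph `G` on `n` vertices satisfies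
`|E(G)| >= ((wt H - 1)/2) * n - (wt(H)^2 - 4 wt(H) + 5)/2`, provided `wt H >= 2`. -/
theorem stmt1 {α : Type*} [Fintype α] (H : SimpleGraph α) (hE : ∃ u v, H.Adj u v)
    (hw : 2 ≤ graphWt H) (n : ℕ) (G : SimpleGraph (Fin n)) (hsat : isSat H G) :
    ((graphWt H : ℚ) - 1) / 2 * n - ((graphWt H : ℚ) ^ 2 - 4 * (graphWt H : ℚ) + 5) / 2
      ≤ (Nat.card G.edgeSet : ℚ) := by
  classical
  set w := graphWt H with hwdef
  set E := Nat.card G.edgeSet with hEdef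
  rcases Nat.eq_zero_or_pos n with hn0 | hn0
  · subst hn0
    simp only [Nat.cast_zero, mul_zero, zero_sub]
    have : (0 : ℚ) ≤ ((w : ℚ) ^ 2 - 4 * w + 5) / 2 := by
      nlinarith [sq_nonneg ((w : ℚ) - 2)]
    have hE0 : (0 : ℚ) ≤ (E : ℚ) := by positivity
    linarith
  -- pick a minimum degree vertex
  have hne : (Finset.univ : Finset (Fin n)).Nonempty := by
    refine ⟨⟨0, hn0⟩, Finset.mem_univ _⟩
  obtain ⟨x, -, hxmin⟩ := Finset.exists_min_image (α := ℕ) Finset.univ (fun v => G.degree v) hne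
  set A := G.neighborFinset x with hAdef
  set B := Finset.univ \ insert x A with hBdef
  set d := G.degree x with hddef
  have hdA : A.card = d := rfl
  have hxA : x ∉ A := by
    rw [hAdef, SimpleGraph.mem_neighborFinset]
    exact fun h => G.loopless.irrefl x h
  -- key inequality for each y ∈ B
  have hB : ∀ y ∈ B, w ≤ G.degree y + (A ∩ G.neighborFinset y).card + 1 := by
    intro y hy
    rw [hBdef, Finset.mem_sdiff, Finset.mem_insert] at hy
    push_neg at hy
    obtain ⟨-, hyx, hyA⟩ := hy
    have hna : ¬ G.Adj x y := by
      rw [hAdef, SimpleGraph.mem_neighborFinset] at hyA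
      exact hyA
    have hk := key_lemma H G hsat (Ne.symm hyx) hna
    have hmax : max (G.degree x) (G.degree y) = G.degree y :=
      max_eq_right (hxmin y (Finset.mem_univ y))
    rw [hmax] at hk
    rw [hAdef]
    omega
  -- sum over B
  have hBsum : w * B.card ≤ (∑ y ∈ B, G.degree y)
      + (∑ y ∈ B, (A ∩ G.neighborFinset y).card) + B.card := by
    have h1 : ∑ _y ∈ B, w ≤ ∑ y ∈ B, (G.degree y + (A ∩ G.neighborFinset y).card + 1) :=
      Finset.sum_le_sum hB
    simp only [Finset.sum_const, smul_eq_mul, mul_one, Finset.sum_add_distrib] at h1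
    rw [mul_comm w B.card]
    omega
  -- double counting
  have hdc : (∑ y ∈ B, (A ∩ G.neighborFinset y).card) + A.card ≤ ∑ z ∈ A, G.degree z := by
    have e1 : ∑ y ∈ B, (A ∩ G.neighborFinset y).card
        = ∑ z ∈ A, (B ∩ G.neighborFinset z).card := by
      have l1 : ∀ (s t : Finset (Fin n)), (s ∩ t).card = ∑ z ∈ s, if z ∈ t then 1 else 0 := by
        intro s t
        rw [← Finset.filter_mem_eq_inter, Finset.card_filter]
      calc ∑ y ∈ B, (A ∩ G.neighborFinset y).card
          = ∑ y ∈ B, ∑ z ∈ A, if z ∈ G.neighborFinset y then 1 else 0 := by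
            exact Finset.sum_congr rfl fun y _ => l1 A (G.neighborFinset y)
        _ = ∑ z ∈ A, ∑ y ∈ B, if z ∈ G.neighborFinset y then 1 else 0 := Finset.sum_comm
        _ = ∑ z ∈ A, ∑ y ∈ B, if y ∈ G.neighborFinset z then 1 else 0 := by
            refine Finset.sum_congr rfl fun z _ => Finset.sum_congr rfl fun y _ => ?_
            simp only [SimpleGraph.mem_neighborFinset]
            rw [G.adj_comm]
        _ = ∑ z ∈ A, (B ∩ G.neighborFinset z).card := by
            exact Finset.sum_congr rfl fun z _ => (l1 B (G.neighborFinset z)).symm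
    have e2 : ∀ z ∈ A, (B ∩ G.neighborFinset z).card + 1 ≤ G.degree z := by
      intro z hz
      have hxz : x ∈ G.neighborFinset z := by
        rw [SimpleGraph.mem_neighborFinset]
        rw [hAdef, SimpleGraph.mem_neighborFinset] at hz
        exact hz.symm
      have hsub : B ∩ G.neighborFinset z ⊆ (G.neighborFinset z).erase x := by
        intro y hy
        rw [Finset.mem_inter] at hy
        rw [Finset.mem_erase]
        refine ⟨?_, hy.2⟩
        have := hy.1
        rw [hBdef, Finset.mem_sdiff, Finset.mem_insert] at this
        push_neg at this
        exact this.2.1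
      have hcard := Finset.card_le_card hsub
      rw [Finset.card_erase_of_mem hxz] at hcard
      have hdz : G.degree z = (G.neighborFinset z).card := rfl
      have hz1 : 0 < (G.neighborFinset z).card := Finset.card_pos.mpr ⟨x, hxz⟩
      omega
    have e3 : ∑ z ∈ A, ((B ∩ G.neighborFinset z).card + 1) ≤ ∑ z ∈ A, G.degree z :=
      Finset.sum_le_sum e2
    rw [Finset.sum_add_distrib, Finset.sum_const, smul_eq_mul, mul_one] at e3
    omega
  -- sums over A and B fit into total degree sum
  have hdisj : Disjoint A B := by
    rw [Finset.disjoint_left]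
    intro a haA haB
    rw [hBdef, Finset.mem_sdiff, Finset.mem_insert] at haB
    push_neg at haB
    exact haB.2.2 haA
  have hxAB : x ∉ A ∪ B := by
    rw [Finset.mem_union]
    rintro (h | h)
    · exact hxA h
    · rw [hBdef, Finset.mem_sdiff, Finset.mem_insert] at h
      push_neg at h
      exact h.2.1 rfl
  have htot : (∑ z ∈ A, G.degree z) + (∑ y ∈ B, G.degree y) + d ≤ ∑ v, G.degree v := by
    have h1 : (∑ z ∈ A, G.degree z) + (∑ y ∈ B, G.degree y) = ∑ v ∈ A ∪ B, G.degree v :=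
      (Finset.sum_union hdisj).symm
    have h2 : ∑ v ∈ insert x (A ∪ B), G.degree v = G.degree x + ∑ v ∈ A ∪ B, G.degree v :=
      Finset.sum_insert hxAB
    have h3 : ∑ v ∈ insert x (A ∪ B), G.degree v ≤ ∑ v, G.degree v :=
      Finset.sum_le_sum_of_subset (Finset.subset_univ _)
    omega
  have hsumE : ∑ v, G.degree v = 2 * E := by
    rw [SimpleGraph.sum_degrees_eq_twice_card_edges, hEdef]
    congr 1
    rw [Nat.card_coe_set_eq, Set.ncard_eq_toFinset_card']
    exact congrArg Finset.card (Set.toFinset_congr rfl)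
  have hdn : d * n ≤ 2 * E := by
    rw [← hsumE]
    calc d * n = ∑ _v : Fin n, d := by
          simp [Finset.card_univ, mul_comm]
      _ ≤ ∑ v, G.degree v := Finset.sum_le_sum fun v _ => hxmin v (Finset.mem_univ v)
  have hcardB : n = d + 1 + B.card := by
    have h1 : (insert x A).card = d + 1 := by
      rw [Finset.card_insert_of_notMem hxA, hdA]
    have h2 : B.card = n - (d + 1) := by
      rw [hBdef, Finset.card_sdiff_of_subset (Finset.subset_univ _), h1, Finset.card_univ, Fintype.card_fin]
    have h3 : d + 1 ≤ n := by
      calc d + 1 = (insert x A).card := h1.symm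
        _ ≤ (Finset.univ : Finset (Fin n)).card := Finset.card_le_card (Finset.subset_univ _)
        _ = n := by rw [Finset.card_univ, Fintype.card_fin]
    omega
  -- combine to the master natural inequality
  have hmaster : w * B.card + 2 * d ≤ 2 * E + B.card := by
    have := hBsum
    have := hdc
    have := htot
    rw [hsumE] at htot
    rw [hdA] at hdc
    omega
  have hZ := final_arith w d B.card E n hw hcardB hmaster hdn
  have hQ : ((w : ℚ) - 1) * n ≤ 2 * E + ((w : ℚ) ^ 2 - 4 * w + 5) := by
    exact_mod_cast hZ
  linarith
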